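/- Positivity of the local term of the two-spin-flip quantum kinetic Hamiltonian (boundary-mismatch case): For every φ ∈ [0, π/4], the 8 × 8 real matrix M = I₈ − (sin(2φ)/2)·(I₂ ⊗ σ_z ⊗ σ_z) − √(cos(2φ))·(σ_x ⊗ σ_x ⊗ I₂) is positive semidefinite, where ⊗ denotes the Kronecker product. (Its minimal eigenvalue is 1 − (1/2)·√(4·cos(2φ) + sin²(2φ)) ≥ 0, vanishing only at φ = 0.) -/

import Mathlib

open scoped BigOperators Kronecker
open Real

/-- The Pauli matrix `σ_x`. -/
def pauliX : Matrix (Fin 2) (Fin 2) ℝ := !![0, 1; 1, 0]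

/-- The Pauli matrix `σ_z`. -/
def pauliZ : Matrix (Fin 2) (Fin 2) ℝ := !![1, 0; 0, -1]

private lemma block_nonneg (a b x y : ℝ) (h1 : a ≤ 1) (h2 : -1 ≤ a)
    (hb : b ^ 2 ≤ (1 - a) * (1 + a)) :
    0 ≤ (1 - a) * x ^ 2 + (1 + a) * y ^ 2 - 2 * b * x * y := by
  nlinarith [sq_nonneg ((1 - a) * x - b * y), sq_nonneg ((1 + a) * y - b * x),
    mul_le_mul_of_nonneg_right hb (sq_nonneg x), mul_le_mul_of_nonneg_right hb (sq_nonneg y)]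

set_option maxHeartbeats 2000000 in
/-- **Positivity of the local term of the two-spin-flip quantum kinetic Hamiltonian
(boundary-mismatch case).** For every `φ ∈ [0, π/4]`, the `8 × 8` matrix
`M = I₈ − (sin(2φ)/2)·(I₂ ⊗ σ_z ⊗ σ_z) − √(cos(2φ))·(σ_x ⊗ σ_x ⊗ I₂)` is positive
semidefinite; its minimal eigenvalue `1 − (1/2)·√(4·cos(2φ) + sin²(2φ))` is nonnegative
and vanishes only at `φ = 0`. -/
theorem two_flip_local_term_posSemidef (φ : ℝ) (hφ0 : 0 ≤ φ) (hφ1 : φ ≤ π / 4) :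
    ((1 : Matrix (Fin 2 × Fin 2 × Fin 2) (Fin 2 × Fin 2 × Fin 2) ℝ) -
        (Real.sin (2 * φ) / 2) • ((1 : Matrix (Fin 2) (Fin 2) ℝ) ⊗ₖ (pauliZ ⊗ₖ pauliZ)) -
        Real.sqrt (Real.cos (2 * φ)) • (pauliX ⊗ₖ (pauliX ⊗ₖ (1 : Matrix (Fin 2) (Fin 2) ℝ)))).PosSemidef ∧
    0 ≤ 1 - (1 / 2) * Real.sqrt (4 * Real.cos (2 * φ) + Real.sin (2 * φ) ^ 2) ∧
    (1 - (1 / 2) * Real.sqrt (4 * Real.cos (2 * φ) + Real.sin (2 * φ) ^ 2) = 0 ↔ φ = 0) := by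
  have hπ : 0 < π := Real.pi_pos
  have ht0 : 0 ≤ 2 * φ := by linarith
  have ht1 : 2 * φ ≤ π / 2 := by linarith
  have hcos0 : 0 ≤ Real.cos (2 * φ) := Real.cos_nonneg_of_mem_Icc ⟨by linarith, ht1⟩
  have hcos1 : Real.cos (2 * φ) ≤ 1 := Real.cos_le_one _
  have hsc : Real.sin (2 * φ) ^ 2 + Real.cos (2 * φ) ^ 2 = 1 := Real.sin_sq_add_cos_sq _
  have hs1 : Real.sin (2 * φ) ≤ 1 := Real.sin_le_one _
  have hs0 : -1 ≤ Real.sin (2 * φ) := Real.neg_one_le_sin _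
  have hsq : Real.sqrt (Real.cos (2 * φ)) ^ 2 = Real.cos (2 * φ) := Real.sq_sqrt hcos0
  have ha1 : Real.sin (2 * φ) / 2 ≤ 1 := by linarith
  have ha2 : -1 ≤ Real.sin (2 * φ) / 2 := by linarith
  have hb : Real.sqrt (Real.cos (2 * φ)) ^ 2 ≤
      (1 - Real.sin (2 * φ) / 2) * (1 + Real.sin (2 * φ) / 2) := by
    rw [hsq]; nlinarith [hcos1, hcos0, hsc]
  refine ⟨Matrix.posSemidef_iff_dotProduct_mulVec.mpr ⟨?_, ?_⟩, ?_, ?_⟩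
  · -- Hermitian
    have hX : pauliX.transpose = pauliX := by ext i j; fin_cases i <;> fin_cases j <;> rfl
    have hZ : pauliZ.transpose = pauliZ := by ext i j; fin_cases i <;> fin_cases j <;> rfl
    show Matrix.conjTranspose _ = _
    rw [Matrix.conjTranspose_eq_transpose_of_trivial, Matrix.transpose_sub,
      Matrix.transpose_sub, Matrix.transpose_smul, Matrix.transpose_smul,
      Matrix.transpose_one, ← Matrix.kroneckerMap_transpose, ← Matrix.kroneckerMap_transpose,
      ← Matrix.kroneckerMap_transpose, ← Matrix.kroneckerMap_transpose,
      hX, hZ, Matrix.transpose_one]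
  · -- quadratic form nonneg
    intro x
    simp only [dotProduct, Matrix.mulVec, Fintype.sum_prod_type, Fin.sum_univ_two,
      Matrix.sub_apply, Matrix.smul_apply, Matrix.one_apply, Matrix.kroneckerMap_apply,
      pauliX, pauliZ, Matrix.cons_val', Matrix.cons_val_zero, Matrix.cons_val_one,
      Matrix.head_cons, Matrix.head_fin_const, Matrix.empty_val', Matrix.cons_val_fin_one,
      Matrix.of_apply, star_trivial, smul_eq_mul, Prod.mk.injEq, Fin.isValue, zero_ne_one,
      one_ne_zero, and_true, true_and, and_false, false_and, if_true, if_false, ite_true,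
      ite_false, mul_zero, zero_mul, mul_one, one_mul, mul_neg, neg_mul, add_zero, zero_add,
      sub_zero, zero_sub, and_self]
    have b1 := block_nonneg (Real.sin (2 * φ) / 2) (Real.sqrt (Real.cos (2 * φ)))
      (x (0, 0, 0)) (x (1, 1, 0)) ha1 ha2 hb
    have b2 := block_nonneg (Real.sin (2 * φ) / 2) (Real.sqrt (Real.cos (2 * φ)))
      (x (1, 0, 0)) (x (0, 1, 0)) ha1 ha2 hb
    have b3 := block_nonneg (Real.sin (2 * φ) / 2) (Real.sqrt (Real.cos (2 * φ)))
      (x (1, 1, 1)) (x (0, 0, 1)) ha1 ha2 hb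
    have b4 := block_nonneg (Real.sin (2 * φ) / 2) (Real.sqrt (Real.cos (2 * φ)))
      (x (0, 1, 1)) (x (1, 0, 1)) ha1 ha2 hb
    linarith [b1, b2, b3, b4]
  · -- min eigenvalue nonneg
    have harg : 4 * Real.cos (2 * φ) + Real.sin (2 * φ) ^ 2 ≤ 4 := by nlinarith
    have h2 : Real.sqrt (4 * Real.cos (2 * φ) + Real.sin (2 * φ) ^ 2) ≤ 2 := by
      calc Real.sqrt (4 * Real.cos (2 * φ) + Real.sin (2 * φ) ^ 2) ≤ Real.sqrt 4 :=
            Real.sqrt_le_sqrt harg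
        _ = 2 := by rw [show (4 : ℝ) = 2 ^ 2 by norm_num, Real.sqrt_sq (by norm_num)]
    linarith
  · constructor
    · intro h
      have hS : Real.sqrt (4 * Real.cos (2 * φ) + Real.sin (2 * φ) ^ 2) = 2 := by linarith
      have hargnn : 0 ≤ 4 * Real.cos (2 * φ) + Real.sin (2 * φ) ^ 2 := by positivity
      have harg4 : 4 * Real.cos (2 * φ) + Real.sin (2 * φ) ^ 2 = 4 := by
        have := Real.sq_sqrt hargnn
        rw [hS] at this; nlinarith
      have hc1 : Real.cos (2 * φ) = 1 := by nlinarith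
      have h20 : 2 * φ = 0 := by
        rw [Real.cos_eq_one_iff_of_lt_of_lt (by linarith) (by linarith)] at hc1
        exact hc1
      linarith
    · intro h
      subst h
      norm_num
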